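/- Let p, q be integers with 0 < q < p and gcd(p,q) = 1, and let p/q = [a₁, …, a_m] be the continued fraction expansion produced by the Euclidean algorithm. Define ψ_{p,q} ∈ G by ψ_{p,q} = a^{a₁}·b^{-a₂}·a^{a₃}·⋯·a^{a_m} if m is odd, and ψ_{p,q} = a^{a₁}·b^{-a₂}·⋯·b^{-a_m}·b·a·b if m is even. Then the matrix Ω(ψ_{p,q}) has top-left entry equal to q and bottom-left entry equal to p. -/

import Mathlib

/-- `SL2Z` is the group of 2×2 integer matrices of determinant 1. -/
abbrev SL2Z := Matrix.SpecialLinearGroup (Fin 2) ℤ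

/-- The matrix A = [[1,0],[1,1]]. -/
def matA : SL2Z := ⟨!![1, 0; 1, 1], by norm_num [Matrix.det_fin_two_of]⟩

/-- The matrix B = [[1,-1],[0,1]]. -/
def matB : SL2Z := ⟨!![1, -1; 0, 1], by norm_num [Matrix.det_fin_two_of]⟩

/-- The four relators of the presentation of `PMCG₂(T)`:
`a·b·a·b⁻¹·a⁻¹·b⁻¹`, `a·c·a·c⁻¹·a⁻¹·c⁻¹`, `b·c·b⁻¹·c⁻¹`, `(a·b·c)⁴`,
where `a, b, c` are the generators `0, 1, 2`. -/
def pmcgRels : Set (FreeGroup (Fin 3)) :=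
  { FreeGroup.of 0 * FreeGroup.of 1 * FreeGroup.of 0 *
      (FreeGroup.of 1)⁻¹ * (FreeGroup.of 0)⁻¹ * (FreeGroup.of 1)⁻¹,
    FreeGroup.of 0 * FreeGroup.of 2 * FreeGroup.of 0 *
      (FreeGroup.of 2)⁻¹ * (FreeGroup.of 0)⁻¹ * (FreeGroup.of 2)⁻¹,
    FreeGroup.of 1 * FreeGroup.of 2 * (FreeGroup.of 1)⁻¹ * (FreeGroup.of 2)⁻¹,
    (FreeGroup.of 0 * FreeGroup.of 1 * FreeGroup.of 2) ^ 4 }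

/-- `G = ⟨a, b, c | a·b·a = b·a·b, a·c·a = c·a·c, b·c = c·b, (a·b·c)⁴ = 1⟩`,
a presentation of `PMCG₂(T)`. -/
abbrev G := PresentedGroup pmcgRels

/-- The generator `a` (the Dehn twist `t_α`). -/
def ga : G := PresentedGroup.of 0
/-- The generator `b` (the Dehn twist `t_β`). -/
def gb : G := PresentedGroup.of 1
/-- The generator `c` (the Dehn twist `t_γ`). -/
def gc : G := PresentedGroup.of 2

/-- The continued fraction `[a₁, …, a_m] = a₁ + 1/(a₂ + 1/(⋯ + 1/a_m))` of a
list of (positive) integers, as a rational number. -/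
def cf : List ℤ → ℚ
  | [] => 0
  | x :: l => x + (cf l)⁻¹

/-- The alternating product `a^{a₁}·b^{-a₂}·a^{a₃}·⋯` in `G` (factor `a^{aᵢ}`
for odd `i`, factor `b^{-aᵢ}` for even `i`, starting with `a` when the flag
is `false`). -/
def altG : Bool → List ℤ → G
  | _, [] => 1
  | false, x :: l => ga ^ x * altG true l
  | true, x :: l => gb ^ (-x) * altG false l

/-- The element `ψ_{p,q} ∈ G` associated with the continued fraction
expansion `p/q = [a₁, …, a_m]`: it equals `a^{a₁}·b^{-a₂}·⋯·a^{a_m}` if `m`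
is odd, and `a^{a₁}·b^{-a₂}·⋯·b^{-a_m}·b·a·b` if `m` is even. -/
def ψpq (L : List ℤ) : G :=
  if Odd L.length then altG false L else altG false L * (gb * ga * gb)

-- auxiliary definitions and lemmas

def matAi : SL2Z := ⟨!![1, 0; -1, 1], by norm_num [Matrix.det_fin_two_of]⟩
def matBi : SL2Z := ⟨!![1, 1; 0, 1], by norm_num [Matrix.det_fin_two_of]⟩

lemma matA_inv : matA⁻¹ = matAi := by
  apply inv_eq_of_mul_eq_one_right
  ext i j
  rw [Matrix.SpecialLinearGroup.coe_mul]
  fin_cases i <;> fin_cases j <;>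
    simp [matA, matAi, Matrix.SpecialLinearGroup.coe_mul, Matrix.mul_fin_two]

lemma matB_inv : matB⁻¹ = matBi := by
  apply inv_eq_of_mul_eq_one_right
  ext i j
  rw [Matrix.SpecialLinearGroup.coe_mul]
  fin_cases i <;> fin_cases j <;>
    simp [matB, matBi, Matrix.SpecialLinearGroup.coe_mul, Matrix.mul_fin_two]

lemma matA_zpow (n : ℤ) : ((matA ^ n : SL2Z) : Matrix (Fin 2) (Fin 2) ℤ) = !![1, 0; n, 1] := by
  induction n using Int.induction_on with
  | zero => simp [Matrix.one_fin_two]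
  | succ k ih =>
      rw [zpow_add, zpow_one, Matrix.SpecialLinearGroup.coe_mul, ih]
      show _ * (!![1,0;1,1] : Matrix (Fin 2) (Fin 2) ℤ) = _
      rw [Matrix.mul_fin_two]
      ext i j; fin_cases i <;> fin_cases j <;> simp
  | pred k ih =>
      have h : (-(k:ℤ) - 1) = (-(k:ℤ)) - 1 := by ring
      rw [h, zpow_sub_one, matA_inv, Matrix.SpecialLinearGroup.coe_mul, ih]
      show _ * (!![1,0;-1,1] : Matrix (Fin 2) (Fin 2) ℤ) = _
      rw [Matrix.mul_fin_two]
      ext i j; fin_cases i <;> fin_cases j <;> simp <;> ring_nf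

lemma matB_zpow (n : ℤ) : ((matB ^ n : SL2Z) : Matrix (Fin 2) (Fin 2) ℤ) = !![1, -n; 0, 1] := by
  induction n using Int.induction_on with
  | zero => simp [Matrix.one_fin_two]
  | succ k ih =>
      rw [zpow_add, zpow_one, Matrix.SpecialLinearGroup.coe_mul, ih]
      show _ * (!![1,-1;0,1] : Matrix (Fin 2) (Fin 2) ℤ) = _
      rw [Matrix.mul_fin_two]
      ext i j; fin_cases i <;> fin_cases j <;> simp <;> ring
  | pred k ih =>
      have h : (-(k:ℤ) - 1) = (-(k:ℤ)) - 1 := by ring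
      rw [h, zpow_sub_one, matB_inv, Matrix.SpecialLinearGroup.coe_mul, ih]
      show _ * (!![1,1;0,1] : Matrix (Fin 2) (Fin 2) ℤ) = _
      rw [Matrix.mul_fin_two]
      ext i j; fin_cases i <;> fin_cases j <;> simp <;> ring

/-- the `true`-flag analogue of `ψpq` -/
def ψtr (L : List ℤ) : G :=
  if Odd L.length then altG true L * (gb * ga * gb) else altG true L

lemma psi_cons (x : ℤ) (l : List ℤ) : ψpq (x :: l) = ga ^ x * ψtr l := by
  by_cases h : Odd l.length <;>
    simp [ψpq, ψtr, altG, List.length_cons, Nat.odd_add_one, h, mul_assoc]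

lemma psit_cons (x : ℤ) (l : List ℤ) : ψtr (x :: l) = gb ^ (-x) * ψpq l := by
  by_cases h : Odd l.length <;>
    simp [ψpq, ψtr, altG, List.length_cons, Nat.odd_add_one, h, mul_assoc]

lemma key (Ω : G →* SL2Z) (ha : Ω ga = matA) (hb : Ω gb = matB) :
    ∀ L : List ℤ, L ≠ [] → (∀ x ∈ L, 0 < x) →
      (∀ h : L ≠ [], 2 ≤ L.getLast h) →
    ∃ p q : ℤ, 0 < q ∧ q < p ∧ Int.gcd p q = 1 ∧ cf L = (p : ℚ) / q ∧
      (Ω (ψpq L) : Matrix (Fin 2) (Fin 2) ℤ) 0 0 = q ∧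
      (Ω (ψpq L) : Matrix (Fin 2) (Fin 2) ℤ) 1 0 = p ∧
      (Ω (ψtr L) : Matrix (Fin 2) (Fin 2) ℤ) 0 0 = p ∧
      (Ω (ψtr L) : Matrix (Fin 2) (Fin 2) ℤ) 1 0 = q := by
  intro L
  induction L with
  | nil => intro h; exact absurd rfl h
  | cons x l ih =>
      intro _ hpos hlast
      have hx : 0 < x := hpos x List.mem_cons_self
      rcases eq_or_ne l [] with rfl | hl
      · -- base case: L = [x], 2 ≤ x
        have hx2 : 2 ≤ x := by simpa using hlast (by simp)
        refine ⟨x, 1, one_pos, by omega, by simp [Int.gcd], by simp [cf], ?_, ?_, ?_, ?_⟩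
        · have : ψpq [x] = ga ^ x := by simp [ψpq, altG]
          rw [this, map_zpow, ha, matA_zpow]
          simp
        · have : ψpq [x] = ga ^ x := by simp [ψpq, altG]
          rw [this, map_zpow, ha, matA_zpow]
          simp
        · have h2 : (Ω (ψtr [x]) : Matrix (Fin 2) (Fin 2) ℤ) = !![x, -1; 1, 0] := by
            have h1 : ψtr [x] = gb ^ (-x) * (gb * ga * gb) := by simp [ψtr, altG]
            rw [h1]
            simp only [map_mul, map_zpow, ha, hb, Matrix.SpecialLinearGroup.coe_mul,
              matB_zpow, neg_neg]
            have hBAB : (matB : Matrix (Fin 2) (Fin 2) ℤ) * (matA : Matrix (Fin 2) (Fin 2) ℤ) *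
                (matB : Matrix (Fin 2) (Fin 2) ℤ) = !![0,-1;1,0] := by
              show !![1,-1;0,1] * !![1,0;1,1] * !![1,-1;0,1] = _
              rw [Matrix.mul_fin_two, Matrix.mul_fin_two]; norm_num
            rw [hBAB, Matrix.mul_fin_two]; norm_num
          rw [h2]; simp
        · have h2 : (Ω (ψtr [x]) : Matrix (Fin 2) (Fin 2) ℤ) = !![x, -1; 1, 0] := by
            have h1 : ψtr [x] = gb ^ (-x) * (gb * ga * gb) := by simp [ψtr, altG]
            rw [h1]
            simp only [map_mul, map_zpow, ha, hb, Matrix.SpecialLinearGroup.coe_mul,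
              matB_zpow, neg_neg]
            have hBAB : (matB : Matrix (Fin 2) (Fin 2) ℤ) * (matA : Matrix (Fin 2) (Fin 2) ℤ) *
                (matB : Matrix (Fin 2) (Fin 2) ℤ) = !![0,-1;1,0] := by
              show !![1,-1;0,1] * !![1,0;1,1] * !![1,-1;0,1] = _
              rw [Matrix.mul_fin_two, Matrix.mul_fin_two]; norm_num
            rw [hBAB, Matrix.mul_fin_two]; norm_num
          rw [h2]; simp
      · -- inductive step
        have hpos' : ∀ y ∈ l, 0 < y := fun y hy => hpos y (List.mem_cons_of_mem _ hy)
        have hlast' : ∀ h : l ≠ [], 2 ≤ l.getLast h := by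
          intro h
          have := hlast (by simp)
          rwa [List.getLast_cons h] at this
        obtain ⟨p', q', hq', hlt', hg', hcf', f00, f10, t00, t10⟩ := ih hl hpos' hlast'
        have hp' : 0 < p' := hq'.trans hlt'
        refine ⟨x * p' + q', p', hp', by nlinarith, ?_, ?_, ?_, ?_, ?_, ?_⟩
        · -- coprimality
          rw [← Int.isCoprime_iff_gcd_eq_one]
          have h1 : IsCoprime q' p' := (Int.isCoprime_iff_gcd_eq_one.mpr hg').symm
          have h2 : IsCoprime (q' + p' * x) p' := h1.add_mul_left_left x
          have : x * p' + q' = q' + p' * x := by ring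
          rw [this]; exact h2
        · -- continued fraction
          have hq0 : (q' : ℚ) ≠ 0 := by positivity
          have hp0 : (p' : ℚ) ≠ 0 := by positivity
          rw [cf, hcf']
          field_simp
          push_cast
          try ring
        · rw [psi_cons, map_mul, map_zpow, ha, Matrix.SpecialLinearGroup.coe_mul, matA_zpow,
            Matrix.mul_apply, Fin.sum_univ_two]
          simp [t00, t10]
        · rw [psi_cons, map_mul, map_zpow, ha, Matrix.SpecialLinearGroup.coe_mul, matA_zpow,
            Matrix.mul_apply, Fin.sum_univ_two]
          simp [t00, t10]
          try ring
        · rw [psit_cons, map_mul, map_zpow, hb, Matrix.SpecialLinearGroup.coe_mul, matB_zpow,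
            Matrix.mul_apply, Fin.sum_univ_two]
          simp [f00, f10]
          try ring
        · rw [psit_cons, map_mul, map_zpow, hb, Matrix.SpecialLinearGroup.coe_mul, matB_zpow,
            Matrix.mul_apply, Fin.sum_univ_two]
          simp [f00, f10]

lemma rat_unique (p q p' q' : ℤ) (hq : 0 < q) (hq' : 0 < q')
    (h : Int.gcd p q = 1) (h' : Int.gcd p' q' = 1)
    (he : (p : ℚ) / q = (p' : ℚ) / q') : p = p' ∧ q = q' := by
  have hq0 : (q : ℚ) ≠ 0 := by positivity
  have hq0' : (q' : ℚ) ≠ 0 := by positivity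
  have hcross : p * q' = p' * q := by
    have := (div_eq_div_iff hq0 hq0').mp he
    exact_mod_cast this
  have hc : IsCoprime q p := (Int.isCoprime_iff_gcd_eq_one.mpr h).symm
  have hc' : IsCoprime q' p' := (Int.isCoprime_iff_gcd_eq_one.mpr h').symm
  have d1 : q ∣ q' := hc.dvd_of_dvd_mul_left ⟨p', by linarith [hcross]⟩
  have d2 : q' ∣ q := hc'.dvd_of_dvd_mul_left ⟨p, by linarith [hcross]⟩
  have hqq : q = q' := Int.dvd_antisymm hq.le hq'.le d1 d2
  subst hqq
  exact ⟨mul_right_cancel₀ (by omega : q ≠ 0) hcross, rfl⟩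

theorem stmt6 (p q : ℤ) (hq : 0 < q) (hqp : q < p) (hcop : Int.gcd p q = 1)
    (L : List ℤ) (hne : L ≠ []) (hpos : ∀ x ∈ L, 0 < x)
    -- the continued fraction expansion produced by the Euclidean algorithm
    -- is precisely the one with positive coefficients whose last
    -- coefficient is at least 2:
    (hlast : 2 ≤ L.getLast hne)
    (hcf : (p : ℚ) / q = cf L)
    (Ω : G →* SL2Z) (ha : Ω ga = matA) (hb : Ω gb = matB) (hc : Ω gc = matB) :
    (Ω (ψpq L) : Matrix (Fin 2) (Fin 2) ℤ) 0 0 = q ∧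
    (Ω (ψpq L) : Matrix (Fin 2) (Fin 2) ℤ) 1 0 = p := by
  obtain ⟨p', q', hq', hlt', hg', hcf', f00, f10, -, -⟩ :=
    key Ω ha hb L hne hpos (fun _ => hlast)
  obtain ⟨hp, hqe⟩ := rat_unique p q p' q' hq hq' hcop hg' (hcf.trans hcf')
  subst hp; subst hqe
  exact ⟨f00, f10⟩
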